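/- For the function F(θ₁,θ₂) = (1/2)[S(−θ₁)/(1+S(−θ₁)+S(θ₂−4θ₁)) + S(3θ₁−θ₂)/(1+S(4θ₁−θ₂)+S(3θ₁−θ₂))] with S the logistic sigmoid, F(θ₁,θ₂) → 0 if and only if θ₁ → +∞ and θ₂ − 3θ₁ → +∞; in particular inf F = 0 and F > 0 everywhere. -/

import Mathlib

/-- Logistic sigmoid. -/
noncomputable def Sgm (x : ℝ) : ℝ := Real.exp x / (1 + Real.exp x)

/-- The sigmoid-smoothed AP-loss of the counterexample. -/
noncomputable def Fap (θ₁ θ₂ : ℝ) : ℝ :=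
  (1 / 2) * (Sgm (-θ₁) / (1 + Sgm (-θ₁) + Sgm (θ₂ - 4 * θ₁)) +
    Sgm (3 * θ₁ - θ₂) / (1 + Sgm (4 * θ₁ - θ₂) + Sgm (3 * θ₁ - θ₂)))

lemma Sgm_pos (x : ℝ) : 0 < Sgm x := by unfold Sgm; positivity

lemma Sgm_lt_one (x : ℝ) : Sgm x < 1 := by
  unfold Sgm
  rw [div_lt_one (by positivity)]
  linarith [Real.exp_pos x]

lemma Sgm_strictMono : StrictMono Sgm := by
  intro a b hab
  unfold Sgm
  rw [div_lt_div_iff₀ (by positivity) (by positivity)]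
  have h := Real.exp_lt_exp.2 hab
  nlinarith [Real.exp_pos a, Real.exp_pos b]

lemma Sgm_tendsto_atBot : Filter.Tendsto Sgm Filter.atBot (nhds 0) := by
  have h1 : Filter.Tendsto Real.exp Filter.atBot (nhds 0) := Real.tendsto_exp_atBot
  have h2 : Filter.Tendsto (fun x => 1 + Real.exp x) Filter.atBot (nhds 1) := by
    simpa using (tendsto_const_nhds.add h1)
  have := h1.div h2 one_ne_zero
  rw [zero_div] at this
  exact this

lemma Sgm_seq_iff (x : ℕ → ℝ) :
    Filter.Tendsto (fun n => Sgm (x n)) Filter.atTop (nhds 0) ↔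
    Filter.Tendsto x Filter.atTop Filter.atBot := by
  constructor
  · intro h
    rw [Filter.tendsto_atBot]
    intro b
    have hb : 0 < Sgm b := Sgm_pos b
    have hev := h.eventually (gt_mem_nhds hb)
    filter_upwards [hev] with n hn
    by_contra hbn
    push_neg at hbn
    exact absurd (Sgm_strictMono hbn) (by linarith)
  · intro h
    exact Sgm_tendsto_atBot.comp h

lemma term_bounds (s t : ℝ) :
    Sgm t / 3 ≤ Sgm t / (1 + Sgm s + Sgm t) ∧
      Sgm t / (1 + Sgm s + Sgm t) ≤ Sgm t := by
  have hs := Sgm_pos s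
  have ht := Sgm_pos t
  have hs1 := Sgm_lt_one s
  have ht1 := Sgm_lt_one t
  have hD : (0:ℝ) < 1 + Sgm s + Sgm t := by linarith
  exact ⟨div_le_div_of_nonneg_left ht.le hD (by linarith),
    div_le_self ht.le (by linarith)⟩

lemma Fap_bounds (θ₁ θ₂ : ℝ) :
    (Sgm (-θ₁) + Sgm (3 * θ₁ - θ₂)) / 6 ≤ Fap θ₁ θ₂ ∧
      Fap θ₁ θ₂ ≤ (Sgm (-θ₁) + Sgm (3 * θ₁ - θ₂)) / 2 := by
  have h1 := term_bounds (θ₂ - 4 * θ₁) (-θ₁)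
  have h2 := term_bounds (4 * θ₁ - θ₂) (3 * θ₁ - θ₂)
  have e1 : Sgm (-θ₁) / (1 + Sgm (θ₂ - 4 * θ₁) + Sgm (-θ₁))
      = Sgm (-θ₁) / (1 + Sgm (-θ₁) + Sgm (θ₂ - 4 * θ₁)) := by ring_nf
  rw [e1] at h1
  refine ⟨?_, ?_⟩ <;> · unfold Fap; linarith [h1.1, h1.2, h2.1, h2.2]

lemma Fap_pos (θ₁ θ₂ : ℝ) : 0 < Fap θ₁ θ₂ := by
  have h := (Fap_bounds θ₁ θ₂).1
  have := Sgm_pos (-θ₁)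
  have := Sgm_pos (3 * θ₁ - θ₂)
  linarith

/-- `F > 0` everywhere, `inf F = 0`, and `F → 0` along a sequence iff
`θ₁ → +∞` and `θ₂ - 3θ₁ → +∞`. -/
theorem stmt6 :
    (∀ θ₁ θ₂ : ℝ, 0 < Fap θ₁ θ₂) ∧
    IsGLB (Set.range fun p : ℝ × ℝ => Fap p.1 p.2) 0 ∧
    ∀ a b : ℕ → ℝ,
      (Filter.Tendsto (fun n => Fap (a n) (b n)) Filter.atTop (nhds 0) ↔
        (Filter.Tendsto a Filter.atTop Filter.atTop ∧
         Filter.Tendsto (fun n => b n - 3 * a n) Filter.atTop Filter.atTop)) := by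
  -- main sequence characterization
  have main : ∀ a b : ℕ → ℝ,
      Filter.Tendsto (fun n => Fap (a n) (b n)) Filter.atTop (nhds 0) ↔
        (Filter.Tendsto a Filter.atTop Filter.atTop ∧
         Filter.Tendsto (fun n => b n - 3 * a n) Filter.atTop Filter.atTop) := by
    intro a b
    set u : ℕ → ℝ := fun n => Sgm (-(a n)) with hu
    set v : ℕ → ℝ := fun n => Sgm (3 * a n - b n) with hv
    have hbl := fun n => (Fap_bounds (a n) (b n)).1
    have hbu := fun n => (Fap_bounds (a n) (b n)).2
    constructor
    · intro h
      have h6 : Filter.Tendsto (fun n => 6 * Fap (a n) (b n)) Filter.atTop (nhds 0) := by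
        simpa using h.const_mul 6
      have huv : Filter.Tendsto (fun n => u n + v n) Filter.atTop (nhds 0) := by
        apply squeeze_zero (fun n => by
          have := Sgm_pos (-(a n)); have := Sgm_pos (3 * a n - b n); positivity)
          (fun n => by have := hbl n; simp only [hu, hv]; linarith) h6
      have hu0 : Filter.Tendsto u Filter.atTop (nhds 0) :=
        squeeze_zero (fun n => (Sgm_pos _).le)
          (fun n => by have := Sgm_pos (3 * a n - b n); simp only [hu, hv] at *; linarith) huv
      have hv0 : Filter.Tendsto v Filter.atTop (nhds 0) :=
        squeeze_zero (fun n => (Sgm_pos _).le)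
          (fun n => by have := Sgm_pos (-(a n)); simp only [hu, hv] at *; linarith) huv
      have ha : Filter.Tendsto (fun n => -(a n)) Filter.atTop Filter.atBot :=
        (Sgm_seq_iff _).1 hu0
      have hb : Filter.Tendsto (fun n => 3 * a n - b n) Filter.atTop Filter.atBot :=
        (Sgm_seq_iff _).1 hv0
      constructor
      · exact Filter.tendsto_neg_atBot_iff.1 ha
      · have e : (fun n => 3 * a n - b n) = fun n => -(b n - 3 * a n) := by
          funext n; ring
        rw [e] at hb
        exact Filter.tendsto_neg_atBot_iff.1 hb
    · rintro ⟨ha, hb⟩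
      have hu0 : Filter.Tendsto u Filter.atTop (nhds 0) :=
        (Sgm_seq_iff _).2 (Filter.tendsto_neg_atBot_iff.2 ha)
      have hv0 : Filter.Tendsto v Filter.atTop (nhds 0) := by
        apply (Sgm_seq_iff _).2
        have e : (fun n => 3 * a n - b n) = fun n => -(b n - 3 * a n) := by
          funext n; ring
        rw [e]
        exact Filter.tendsto_neg_atBot_iff.2 hb
      have huv : Filter.Tendsto (fun n => (u n + v n) / 2) Filter.atTop (nhds 0) := by
        simpa using (hu0.add hv0).div_const 2
      apply squeeze_zero (fun n => (Fap_pos _ _).le)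
        (fun n => by have := hbu n; simp only [hu, hv]; linarith) huv
  refine ⟨Fap_pos, ⟨?_, ?_⟩, main⟩
  · rintro x ⟨p, rfl⟩
    exact (Fap_pos p.1 p.2).le
  · intro c hc
    have hseq : Filter.Tendsto (fun n : ℕ => Fap (n : ℝ) (4 * n)) Filter.atTop (nhds 0) := by
      apply (main (fun n : ℕ => (n : ℝ)) (fun n : ℕ => 4 * n)).2
      constructor
      · exact tendsto_natCast_atTop_atTop
      · have : (fun n : ℕ => 4 * (n : ℝ) - 3 * n) = fun n : ℕ => (n : ℝ) := by
          funext n; ring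
        rw [this]
        exact tendsto_natCast_atTop_atTop
    exact ge_of_tendsto hseq (Filter.Eventually.of_forall fun n =>
      hc ⟨((n : ℝ), 4 * n), rfl⟩)
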